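/- arXiv:1702.03795 — 5 statements merged into one kernel-verified Lean document; each statement's English description precedes it below -/
import Mathlib

section
/- With E, T, n, τ, g, f₀, f and the averaged interpolants f_τ^k as in the context, the following estimate holds: Σ_{k=1}^n τ · ‖(f_τ^k − f_τ^{k−1})/τ‖² ≤ 2 · ∫_0^T ‖g(s)‖² ds. -/
open MeasureTheory

private lemma cs_aux {E : Type*} [NormedAddCommGroup E]
    {g : ℝ → E} {a b : ℝ} (hab : a ≤ b)
    (hm : AEStronglyMeasurable g (volume.restrict (Set.Ioc a b)))
    (h2 : IntegrableOn (fun s => ‖g s‖ ^ 2) (Set.Ioc a b)) :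
    (∫ s in Set.Ioc a b, ‖g s‖) ^ 2 ≤ (b - a) * ∫ s in Set.Ioc a b, ‖g s‖ ^ 2 := by
  set μ := volume.restrict (Set.Ioc a b) with hμ
  have hfin : IsFiniteMeasure μ := by
    constructor
    rw [hμ, Measure.restrict_apply_univ]
    exact measure_Ioc_lt_top
  have hgm : MemLp (fun s => ‖g s‖) 2 μ := by
    rw [memLp_two_iff_integrable_sq hm.norm]
    exact h2
  have h1 : MemLp (fun _ : ℝ => (1:ℝ)) 2 μ := memLp_const 1
  have hpq : Real.HolderConjugate 2 2 := by
    constructor <;> norm_num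
  have := MeasureTheory.integral_mul_le_Lp_mul_Lq_of_nonneg hpq
    (f := fun _ : ℝ => (1:ℝ)) (g := fun s => ‖g s‖) (μ := μ)
    (Filter.Eventually.of_forall fun _ => zero_le_one)
    (Filter.Eventually.of_forall fun s => norm_nonneg _)
    (by simpa using h1) (by simpa using hgm)
  have hrp : ∀ x : ℝ, x ^ (2:ℝ) = x ^ (2:ℕ) := fun x => by
    rw [← Real.rpow_natCast x 2]; norm_num
  simp only [one_mul, Real.one_rpow, one_pow, hrp] at this
  have hμu : ∫ _ : ℝ, (1:ℝ) ∂μ = b - a := by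
    simp [hμ, Real.volume_Ioc, ENNReal.toReal_ofReal (sub_nonneg.2 hab), hab]
  rw [hμu] at this
  have hi1 : (0:ℝ) ≤ ∫ s, ‖g s‖ ∂μ := integral_nonneg fun s => norm_nonneg _
  have hi2 : (0:ℝ) ≤ ∫ s, ‖g s‖ ^ 2 ∂μ := integral_nonneg fun s => sq_nonneg _
  calc (∫ s, ‖g s‖ ∂μ) ^ 2 ≤ ((b-a) ^ (1/2:ℝ) * (∫ s, ‖g s‖^2 ∂μ) ^ (1/2:ℝ)) ^ 2 := by
        apply pow_le_pow_left₀ hi1 this 2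
    _ = (b - a) * ∫ s, ‖g s‖ ^ 2 ∂μ := by
        rw [mul_pow, ← Real.rpow_natCast ((b-a) ^ (1/2:ℝ)) 2,
          ← Real.rpow_natCast ((∫ s, ‖g s‖^2 ∂μ) ^ (1/2:ℝ)) 2,
          ← Real.rpow_mul (sub_nonneg.2 hab), ← Real.rpow_mul hi2]
        norm_num

set_option maxHeartbeats 1000000 in
/-- First inequality of Lemma 11 of the paper (with explicit constant 2): the discrete
time-difference quotients of the local averages of `f` are controlled in a discrete
L²-in-time norm by the L² norm of the derivative `g`. -/
theorem discrete_difference_quotient_estimate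
    {E : Type*} [NormedAddCommGroup E] [NormedSpace ℝ E] [CompleteSpace E]
    (T : ℝ) (hT : 0 < T) (n : ℕ) (hn : 1 ≤ n) (τ : ℝ) (hτ : τ = T / n)
    (g : ℝ → E) (hg_meas : StronglyMeasurable g)
    (hg_int : IntegrableOn (fun s => ‖g s‖ ^ 2) (Set.Ioc 0 T))
    (f0 : E) (f : ℝ → E) (hf : ∀ t, f t = f0 + ∫ s in (0:ℝ)..t, g s)
    (fτ : ℕ → E) (hfτ0 : fτ 0 = f0)
    (hfτ : ∀ k : ℕ, 1 ≤ k → k ≤ n →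
      fτ k = (1 / τ) • ∫ t in (((k : ℝ) - 1) * τ)..((k : ℝ) * τ), f t) :
    ∑ k ∈ Finset.Icc 1 n, τ * ‖(1 / τ) • (fτ k - fτ (k - 1))‖ ^ 2
      ≤ 2 * ∫ s in (0:ℝ)..T, ‖g s‖ ^ 2 := by
  have hn0 : (0:ℝ) < n := by exact_mod_cast Nat.pos_of_ne_zero (by omega)
  have hτ0 : 0 < τ := by rw [hτ]; positivity
  have hnτ : (n:ℝ) * τ = T := by rw [hτ]; field_simp
  -- integrability of g on (0, T]
  have hgi : IntegrableOn g (Set.Ioc 0 T) := by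
    have hc : IntegrableOn (fun s => 1 + ‖g s‖^2) (Set.Ioc 0 T) := by
      refine (integrableOn_const ?_).add hg_int
      exact measure_Ioc_lt_top.ne
    refine Integrable.mono' hc hg_meas.aestronglyMeasurable.restrict ?_
    refine Filter.Eventually.of_forall fun s => ?_
    have := norm_nonneg (g s)
    nlinarith [sq_nonneg (‖g s‖ - 1)]
  have hgsub : ∀ {a b : ℝ}, 0 ≤ a → b ≤ T → IntegrableOn g (Set.Ioc a b) :=
    fun ha hb => hgi.mono_set (Set.Ioc_subset_Ioc ha hb)
  have hFsub : ∀ {a b : ℝ}, 0 ≤ a → b ≤ T →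
      IntegrableOn (fun s => ‖g s‖^2) (Set.Ioc a b) :=
    fun ha hb => hg_int.mono_set (Set.Ioc_subset_Ioc ha hb)
  have hgii : ∀ {a b : ℝ}, 0 ≤ a → a ≤ b → b ≤ T → IntervalIntegrable g volume a b :=
    fun ha hab hb => (intervalIntegrable_iff_integrableOn_Ioc_of_le hab).2 (hgsub ha hb)
  have hFii : ∀ {a b : ℝ}, 0 ≤ a → a ≤ b → b ≤ T →
      IntervalIntegrable (fun s => ‖g s‖^2) volume a b :=
    fun ha hab hb => (intervalIntegrable_iff_integrableOn_Ioc_of_le hab).2 (hFsub ha hb)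
  -- f is continuous on [0, T]
  have hfc : ContinuousOn f (Set.Icc 0 T) := by
    have h1 : IntegrableOn g (Set.uIcc 0 T) := by
      rw [Set.uIcc_of_le hT.le, integrableOn_Icc_iff_integrableOn_Ioc]
      exact hgi
    have h2 := (continuousOn_const (c := f0)).add
      (intervalIntegral.continuousOn_primitive_interval h1)
    rw [Set.uIcc_of_le hT.le] at h2
    exact h2.congr fun t _ => hf t
  have hfii : ∀ {a b : ℝ}, 0 ≤ a → a ≤ b → b ≤ T → IntervalIntegrable f volume a b := by
    intro a b ha hab hb
    apply ContinuousOn.intervalIntegrable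
    apply hfc.mono
    rw [Set.uIcc_of_le hab]
    exact Set.Icc_subset_Icc ha hb
  -- difference formula
  have hdiff : ∀ s t : ℝ, 0 ≤ s → s ≤ t → t ≤ T → f t - f s = ∫ u in Set.Ioc s t, g u := by
    intro s t hs hst ht
    rw [hf t, hf s]
    have h1 : (∫ u in (0:ℝ)..t, g u) - ∫ u in (0:ℝ)..s, g u = ∫ u in s..t, g u :=
      intervalIntegral.integral_interval_sub_left (hgii le_rfl (hs.trans hst) ht)
        (hgii le_rfl hs (hst.trans ht))
    rw [← intervalIntegral.integral_of_le hst, ← h1]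
    abel
  -- pointwise key bound
  have key : ∀ c b s t : ℝ, 0 ≤ c → b ≤ T → c ≤ s → s ≤ t → t ≤ b → t - s ≤ τ →
      ‖f t - f s‖ ≤ Real.sqrt (τ * ∫ u in Set.Ioc c b, ‖g u‖^2) := by
    intro c b s t hc hb hcs hst htb hts
    have hs0 : 0 ≤ s := hc.trans hcs
    have htT : t ≤ T := htb.trans hb
    rw [hdiff s t hs0 hst htT]
    have h2 := cs_aux hst hg_meas.aestronglyMeasurable.restrict (hFsub hs0 htT)
    have h3 : (∫ u in Set.Ioc s t, ‖g u‖^2) ≤ ∫ u in Set.Ioc c b, ‖g u‖^2 :=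
      setIntegral_mono_set (hFsub hc hb)
        (Filter.Eventually.of_forall fun u => sq_nonneg _)
        (HasSubset.Subset.eventuallyLE (Set.Ioc_subset_Ioc hcs htb))
    have h4 : (∫ u in Set.Ioc s t, ‖g u‖)^2 ≤ τ * ∫ u in Set.Ioc c b, ‖g u‖^2 :=
      h2.trans (mul_le_mul hts h3 (integral_nonneg fun u => sq_nonneg _) hτ0.le)
    calc ‖∫ u in Set.Ioc s t, g u‖ ≤ ∫ u in Set.Ioc s t, ‖g u‖ :=
          norm_integral_le_integral_norm _
      _ ≤ Real.sqrt (τ * ∫ u in Set.Ioc c b, ‖g u‖^2) := by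
          rw [← Real.sqrt_sq (integral_nonneg fun u => norm_nonneg _)]
          exact Real.sqrt_le_sqrt h4
  -- per-index bound
  obtain ⟨A, hA⟩ : ∃ A : ℕ → ℝ, A = fun k : ℕ => ∫ u in Set.Ioc (((k:ℝ)-1)*τ) ((k:ℝ)*τ), ‖g u‖^2 := ⟨_, rfl⟩
  obtain ⟨B, hB⟩ : ∃ B : ℕ → ℝ, B = fun k : ℕ => ∫ u in Set.Ioc ((((k:ℝ)-2)*τ) ⊔ 0) (((k:ℝ)-1)*τ), ‖g u‖^2 := ⟨_, rfl⟩
  have perk : ∀ k ∈ Finset.Icc 1 n, τ * ‖(1 / τ) • (fτ k - fτ (k - 1))‖ ^ 2 ≤ A k + B k := by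
    intro k hk
    rw [Finset.mem_Icc] at hk
    obtain ⟨hk1, hkn⟩ := hk
    have hk1R : (1:ℝ) ≤ (k:ℝ) := by exact_mod_cast hk1
    have hknR : (k:ℝ) ≤ (n:ℝ) := by exact_mod_cast hkn
    obtain ⟨a, ha⟩ : ∃ a : ℝ, a = ((k:ℝ)-1)*τ := ⟨_, rfl⟩
    obtain ⟨b, hb⟩ : ∃ b : ℝ, b = ((k:ℝ))*τ := ⟨_, rfl⟩
    obtain ⟨c, hc⟩ : ∃ c : ℝ, c = (((k:ℝ)-2)*τ) ⊔ 0 := ⟨_, rfl⟩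
    have ha0 : 0 ≤ a := by rw [ha]; nlinarith
    have hab : a ≤ b := by rw [ha, hb]; nlinarith
    have hbT : b ≤ T := by rw [hb, ← hnτ]; nlinarith
    have hc0 : 0 ≤ c := by rw [hc]; exact le_max_right _ _
    have hca : c ≤ a := by
      rw [hc, ha]
      apply max_le _ (by nlinarith)
      nlinarith
    obtain ⟨M, hM⟩ : ∃ M : ℝ, M = Real.sqrt (τ * ∫ u in Set.Ioc c b, ‖g u‖^2) := ⟨_, rfl⟩
    have hW0 : 0 ≤ τ * ∫ u in Set.Ioc c b, ‖g u‖^2 :=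
      mul_nonneg hτ0.le (integral_nonneg fun u => sq_nonneg _)
    have hM0 : 0 ≤ M := by rw [hM]; exact Real.sqrt_nonneg _
    have habs : ‖(1:ℝ)/τ‖ = 1/τ := by
      rw [Real.norm_eq_abs, abs_of_pos (by positivity)]
    have hDle : ‖fτ k - fτ (k-1)‖ ≤ M := by
      rcases eq_or_lt_of_le hk1 with h1 | h2
      · -- k = 1
        subst h1
        have ha' : a = 0 := by rw [ha]; push_cast; ring
        have hb' : b = τ := by rw [hb]; push_cast; ring
        have hc' : c = 0 := by
          rw [hc]
          apply max_eq_right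
          push_cast
          nlinarith
        have hτT : τ ≤ T := by rw [← hnτ]; nlinarith
        have hfτ1 := hfτ 1 le_rfl hkn
        have hfτ1' : fτ 1 = (1 / τ) • ∫ t in (0:ℝ)..τ, f t := by
          rw [hfτ1]; norm_num
        have hf0 : f 0 = f0 := by rw [hf 0]; simp
        have hconst : f0 = (1 / τ) • ∫ _ in (0:ℝ)..τ, f0 := by
          rw [intervalIntegral.integral_const, smul_smul, sub_zero, one_div,
            inv_mul_cancel₀ hτ0.ne', one_smul]
        have hint1 : IntervalIntegrable f volume 0 τ := hfii le_rfl hτ0.le hτT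
        have hisub : (∫ t in (0:ℝ)..τ, (f t - f0))
            = (∫ t in (0:ℝ)..τ, f t) - ∫ _ in (0:ℝ)..τ, f0 :=
          intervalIntegral.integral_sub hint1 intervalIntegrable_const
        have hsub : fτ 1 - fτ (1-1) = (1 / τ) • ∫ t in (0:ℝ)..τ, (f t - f0) := by
          show fτ 1 - fτ 0 = _
          rw [hfτ1', hfτ0, hisub, smul_sub, ← hconst]
        have hbound : ∀ t ∈ Set.uIoc (0:ℝ) τ, ‖f t - f0‖ ≤ M := by
          intro t ht
          rw [Set.uIoc_of_le hτ0.le] at ht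
          rw [← hf0, hM]
          apply key c b 0 t hc0 hbT (le_of_eq hc') ht.1.le
          · rw [hb']; exact ht.2
          · rw [sub_zero]; exact ht.2
        have hni := intervalIntegral.norm_integral_le_of_norm_le_const hbound
        rw [sub_zero, abs_of_pos hτ0] at hni
        rw [hsub, norm_smul, habs]
        calc (1/τ) * ‖∫ t in (0:ℝ)..τ, (f t - f0)‖ ≤ (1/τ) * (M * τ) := by
              apply mul_le_mul_of_nonneg_left hni (by positivity)
          _ = M := by field_simp
      · -- k ≥ 2
        have hk2 : 2 ≤ k := h2
        have hk2R : (2:ℝ) ≤ (k:ℝ) := by exact_mod_cast hk2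
        have hc' : c = ((k:ℝ)-2)*τ := by
          rw [hc]
          apply max_eq_left
          nlinarith
        have hfτk := hfτ k hk1 hkn
        rw [← ha, ← hb] at hfτk
        have hfτk1 := hfτ (k-1) (by omega) (by omega)
        have hcast : ((k - 1 : ℕ) : ℝ) = (k:ℝ) - 1 := by
          push_cast [Nat.cast_sub hk1]; ring
        rw [hcast] at hfτk1
        have hlo : ((k:ℝ) - 1 - 1) * τ = a - τ := by rw [ha]; ring
        have hhi : ((k:ℝ) - 1) * τ = b - τ := by rw [hb]; ring
        rw [hlo, hhi] at hfτk1
        have hshift : (∫ t in (a - τ)..(b - τ), f t) = ∫ t in a..b, f (t - τ) :=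
          (intervalIntegral.integral_comp_sub_right f τ).symm
        rw [hshift] at hfτk1
        have haτ0 : 0 ≤ a - τ := by rw [ha]; nlinarith
        have hfint1 : IntervalIntegrable f volume a b := hfii ha0 hab hbT
        have hfint2 : IntervalIntegrable (fun t => f (t - τ)) volume a b := by
          have h := (hfii (a := a - τ) (b := b - τ) haτ0 (by linarith) (by linarith)).comp_sub_right τ
          have e1 : a - τ + τ = a := by ring
          have e2 : b - τ + τ = b := by ring
          rwa [e1, e2] at h
        have hsub : fτ k - fτ (k-1) = (1 / τ) • ∫ t in a..b, (f t - f (t - τ)) := by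
          rw [hfτk, hfτk1, ← smul_sub, intervalIntegral.integral_sub hfint1 hfint2]
        have hbound : ∀ t ∈ Set.uIoc a b, ‖f t - f (t - τ)‖ ≤ M := by
          intro t ht
          rw [Set.uIoc_of_le hab] at ht
          rw [hM]
          apply key c b (t - τ) t hc0 hbT
          · rw [hc']; have h6 := ht.1; rw [ha] at h6; linarith
          · linarith
          · exact ht.2
          · linarith
        have hni := intervalIntegral.norm_integral_le_of_norm_le_const hbound
        have h5 : |b - a| = τ := by
          rw [abs_of_nonneg (by linarith), ha, hb]; ring
        rw [h5] at hni
        rw [hsub, norm_smul, habs]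
        calc (1/τ) * ‖∫ t in a..b, (f t - f (t - τ))‖ ≤ (1/τ) * (M * τ) := by
              apply mul_le_mul_of_nonneg_left hni (by positivity)
          _ = M := by field_simp
    -- conclude the per-index bound
    have hsplit : (∫ u in Set.Ioc c b, ‖g u‖^2) = B k + A k := by
      have e1 : (∫ u in Set.Ioc c b, ‖g u‖^2) = ∫ u in c..b, ‖g u‖^2 :=
        (intervalIntegral.integral_of_le (hca.trans hab)).symm
      have e2 : (∫ u in Set.Ioc c a, ‖g u‖^2) = ∫ u in c..a, ‖g u‖^2 :=
        (intervalIntegral.integral_of_le hca).symm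
      have e3 : (∫ u in Set.Ioc a b, ‖g u‖^2) = ∫ u in a..b, ‖g u‖^2 :=
        (intervalIntegral.integral_of_le hab).symm
      have hadd := intervalIntegral.integral_add_adjacent_intervals
        (hFii hc0 hca (le_trans hab hbT)) (hFii ha0 hab hbT)
        (f := fun u => ‖g u‖^2) (μ := volume)
      simp only [hA, hB, ← ha, ← hb, ← hc]
      rw [e1, ← hadd, ← e2, ← e3]
    rw [norm_smul, habs]
    have hM2 : M^2 = τ * ∫ u in Set.Ioc c b, ‖g u‖^2 := by
      rw [hM]; exact Real.sq_sqrt hW0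
    calc τ * (1/τ * ‖fτ k - fτ (k-1)‖)^2 ≤ τ * (1/τ * M)^2 := by
          apply mul_le_mul_of_nonneg_left _ hτ0.le
          apply pow_le_pow_left₀ (by positivity) _ 2
          apply mul_le_mul_of_nonneg_left hDle (by positivity)
      _ = M^2 / τ := by field_simp
      _ = ∫ u in Set.Ioc c b, ‖g u‖^2 := by rw [hM2]; field_simp
      _ = B k + A k := hsplit
      _ = A k + B k := by ring
  -- sum the bounds
  have hsum1 : ∑ k ∈ Finset.Icc 1 n, A k = ∫ s in (0:ℝ)..T, ‖g s‖^2 := by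
    rw [← Finset.Ico_add_one_right_eq_Icc, Finset.sum_Ico_eq_sum_range]
    have hrange : n + 1 - 1 = n := by omega
    simp only [hrange]
    obtain ⟨as, has⟩ : ∃ as : ℕ → ℝ, as = fun i : ℕ => (i:ℝ) * τ := ⟨_, rfl⟩
    have hasv : ∀ i : ℕ, as i = (i:ℝ) * τ := fun i => by rw [has]
    have has0 : ∀ i : ℕ, 0 ≤ as i := fun i => by rw [hasv]; positivity
    have hmono : ∀ i : ℕ, as i ≤ as (i+1) := by
      intro i
      rw [hasv, hasv]
      push_cast
      nlinarith [Nat.cast_nonneg (α := ℝ) i]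
    have hasT : ∀ i : ℕ, i ≤ n → as i ≤ T := by
      intro i hi
      rw [hasv, ← hnτ]
      have : (i:ℝ) ≤ (n:ℝ) := by exact_mod_cast hi
      nlinarith
    have hterm : ∀ i : ℕ, A (1 + i) = ∫ u in (as i)..(as (i+1)), ‖g u‖^2 := by
      intro i
      rw [hA]
      have e2 : ((1 + i : ℕ) : ℝ) = ((i + 1 : ℕ) : ℝ) := by push_cast; ring
      have e1 : ((i + 1 : ℕ) : ℝ) - 1 = (i:ℝ) := by push_cast; ring
      simp only [e2, e1]
      rw [intervalIntegral.integral_of_le (hmono i), hasv i, hasv (i+1)]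
    simp only [hterm]
    have hint1 : ∀ i : ℕ, i < n →
        IntervalIntegrable (fun u => ‖g u‖^2) volume (as i) (as (i+1)) := fun i hi =>
      (intervalIntegrable_iff_integrableOn_Ioc_of_le (hmono i)).2
        (hFsub (has0 i) (hasT (i+1) hi))
    have hadj := intervalIntegral.sum_integral_adjacent_intervals hint1
    rw [hadj]
    have e0 : as 0 = 0 := by rw [hasv]; norm_num
    have eN : as n = T := by rw [hasv]; exact hnτ
    rw [e0, eN]
  have hsum2 : ∑ k ∈ Finset.Icc 1 n, B k ≤ ∫ s in (0:ℝ)..T, ‖g s‖^2 := by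
    rw [← Finset.Ico_add_one_right_eq_Icc, Finset.sum_Ico_eq_sum_range]
    have hrange : n + 1 - 1 = n := by omega
    simp only [hrange]
    obtain ⟨bs, hbs⟩ : ∃ bs : ℕ → ℝ, bs = fun i : ℕ => ((i:ℝ) - 1) * τ ⊔ 0 := ⟨_, rfl⟩
    have hbsv : ∀ i : ℕ, bs i = ((i:ℝ) - 1) * τ ⊔ 0 := fun i => by rw [hbs]
    have hbs0 : ∀ i : ℕ, 0 ≤ bs i := fun i => by rw [hbsv]; exact le_max_right _ _
    have hbsucc : ∀ i : ℕ, bs (i+1) = (i:ℝ) * τ := by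
      intro i
      rw [hbsv]
      have e : ((i + 1 : ℕ) : ℝ) - 1 = (i:ℝ) := by push_cast; ring
      rw [e]
      exact max_eq_left (by positivity)
    have hbsmono : ∀ i : ℕ, bs i ≤ bs (i+1) := by
      intro i
      rw [hbsv i, hbsucc i]
      apply max_le _ (by positivity)
      nlinarith [Nat.cast_nonneg (α := ℝ) i]
    have hbsT : ∀ i : ℕ, i ≤ n → bs i ≤ T := by
      intro i hi
      rw [hbsv]
      apply max_le _ hT.le
      rw [← hnτ]
      have : (i:ℝ) ≤ (n:ℝ) := by exact_mod_cast hi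
      nlinarith
    have hterm : ∀ i : ℕ, B (1 + i) = ∫ u in (bs i)..(bs (i+1)), ‖g u‖^2 := by
      intro i
      rw [hB]
      have e1 : ((1 + i : ℕ) : ℝ) - 2 = (i:ℝ) - 1 := by push_cast; ring
      have e2 : ((1 + i : ℕ) : ℝ) - 1 = (i:ℝ) := by push_cast; ring
      simp only [e1, e2]
      rw [intervalIntegral.integral_of_le (hbsmono i), hbsv i, hbsucc i]
    simp only [hterm]
    have hint1 : ∀ i : ℕ, i < n →
        IntervalIntegrable (fun u => ‖g u‖^2) volume (bs i) (bs (i+1)) := fun i hi =>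
      (intervalIntegrable_iff_integrableOn_Ioc_of_le (hbsmono i)).2
        (hFsub (hbs0 i) (hbsT (i+1) hi))
    have hadj := intervalIntegral.sum_integral_adjacent_intervals hint1
    rw [hadj]
    have e0 : bs 0 = 0 := by
      rw [hbsv]
      push_cast
      rw [max_eq_right (by nlinarith)]
    have eN : bs n ≤ T := hbsT n le_rfl
    rw [e0, intervalIntegral.integral_of_le (hbs0 n), intervalIntegral.integral_of_le hT.le]
    apply setIntegral_mono_set (hFsub le_rfl le_rfl)
      (Filter.Eventually.of_forall fun u => sq_nonneg _)
      (HasSubset.Subset.eventuallyLE (Set.Ioc_subset_Ioc le_rfl eN))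
  calc ∑ k ∈ Finset.Icc 1 n, τ * ‖(1 / τ) • (fτ k - fτ (k - 1))‖ ^ 2
      ≤ ∑ k ∈ Finset.Icc 1 n, (A k + B k) := Finset.sum_le_sum perk
    _ = (∑ k ∈ Finset.Icc 1 n, A k) + ∑ k ∈ Finset.Icc 1 n, B k := Finset.sum_add_distrib
    _ ≤ (∫ s in (0:ℝ)..T, ‖g s‖^2) + ∫ s in (0:ℝ)..T, ‖g s‖^2 := by
        rw [hsum1]; exact add_le_add_right hsum2 _
    _ = 2 * ∫ s in (0:ℝ)..T, ‖g s‖ ^ 2 := by ring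
end

section
/- With E, T, n, τ, g, f₀, f and the averaged interpolants f_τ^k as in the context, for every k with 1 ≤ k ≤ n−1 the per-step estimate ‖f_τ^{k+1} − f_τ^k‖² ≤ τ · ∫_{(k−1)τ}^{(k+1)τ} ‖g(s)‖² ds holds. -/
open MeasureTheory


lemma sq_integral_le {h : ℝ → ℝ} (hnn : ∀ s, 0 ≤ h s) {a b : ℝ} (hab : a ≤ b)
    (hint : IntegrableOn h (Set.Ioc a b))
    (hint2 : IntegrableOn (fun s => h s ^ 2) (Set.Ioc a b)) :
    ∫ s in Set.Ioc a b, h s ≤ Real.sqrt ((b - a) * ∫ s in Set.Ioc a b, h s ^ 2) := by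
  set P := ∫ s in Set.Ioc a b, h s with hP
  set I2 := ∫ s in Set.Ioc a b, h s ^ 2 with hI2
  have hPnn : 0 ≤ P := setIntegral_nonneg measurableSet_Ioc (fun s _ => hnn s)
  have hI2nn : 0 ≤ I2 := setIntegral_nonneg measurableSet_Ioc (fun s _ => sq_nonneg _)
  have key : ∀ c : ℝ, 0 < c → P ≤ (c * (b - a) + I2 / c) / 2 := by
    intro c hc
    have hb : P ≤ ∫ s in Set.Ioc a b, (c + h s ^ 2 / c) / 2 := by
      apply setIntegral_mono_on hint _ measurableSet_Ioc
      · intro s _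
        have h2 : h s ^ 2 / c * c = h s ^ 2 := div_mul_cancel₀ _ hc.ne'
        nlinarith [sq_nonneg (h s - c), hc, hnn s]
      · exact (((integrable_const c).add (hint2.div_const c)).div_const 2)
    calc P ≤ _ := hb
      _ = (c * (b - a) + I2 / c) / 2 := by
          rw [integral_div]
          congr 1
          rw [integral_add (integrable_const c) (hint2.div_const c), integral_div,
            setIntegral_const, measureReal_def, Real.volume_Ioc, smul_eq_mul,
            ENNReal.toReal_ofReal (by linarith)]
          rw [← hI2]; ring
  rcases eq_or_lt_of_le hab with rfl | hlt
  · have hP0 : P = 0 := by simp [hP, Set.Ioc_self]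
    rw [hP0]; exact Real.sqrt_nonneg _
  have hba : 0 < b - a := by linarith
  rcases (eq_or_lt_of_le hI2nn) with h0 | hI2pos
  · have : P ≤ 0 := by
      by_contra hcon
      push_neg at hcon
      have hk := key (P / (b - a)) (by positivity)
      rw [← h0, zero_div, div_mul_cancel₀ _ hba.ne'] at hk
      linarith
    calc P ≤ 0 := this
      _ ≤ _ := Real.sqrt_nonneg _
  · set c := Real.sqrt (I2 / (b - a)) with hc
    have hcpos : 0 < c := Real.sqrt_pos.mpr (by positivity)
    have hc2 : c ^ 2 = I2 / (b - a) := Real.sq_sqrt (by positivity)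
    have hI2eq : I2 = c ^ 2 * (b - a) := by
      field_simp at hc2; linarith
    have hdiv : I2 / c = c * (b - a) := by
      rw [hI2eq]; field_simp
    have h1 : P ≤ c * (b - a) := by
      have := key c hcpos
      rw [hdiv] at this; linarith
    rw [Real.le_sqrt hPnn]
    · nlinarith [mul_self_le_mul_self hPnn h1]
    · positivity

/-- Per-step estimate (eq. 55) in Lemma 11 of the paper:
`‖f_τ^{k+1} − f_τ^k‖² ≤ τ ∫_{(k−1)τ}^{(k+1)τ} ‖g(s)‖² ds` for `1 ≤ k ≤ n − 1`. -/
theorem per_step_interpolant_estimate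
    {E : Type*} [NormedAddCommGroup E] [NormedSpace ℝ E] [CompleteSpace E]
    (T : ℝ) (hT : 0 < T) (n : ℕ) (hn : 1 ≤ n) (τ : ℝ) (hτ : τ = T / n)
    (g : ℝ → E) (hg_meas : StronglyMeasurable g)
    (hg_int : IntegrableOn (fun s => ‖g s‖ ^ 2) (Set.Ioc 0 T))
    (f0 : E) (f : ℝ → E) (hf : ∀ t, f t = f0 + ∫ s in (0:ℝ)..t, g s)
    (fτ : ℕ → E) (hfτ0 : fτ 0 = f0)
    (hfτ : ∀ k : ℕ, 1 ≤ k → k ≤ n →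
      fτ k = (1 / τ) • ∫ t in (((k : ℝ) - 1) * τ)..((k : ℝ) * τ), f t) :
    ∀ k : ℕ, 1 ≤ k → k + 1 ≤ n →
      ‖fτ (k + 1) - fτ k‖ ^ 2
        ≤ τ * ∫ s in (((k : ℝ) - 1) * τ)..(((k : ℝ) + 1) * τ), ‖g s‖ ^ 2 := by
  intro k hk1 hk
  have hnpos : (0:ℝ) < n := by exact_mod_cast Nat.lt_of_lt_of_le Nat.zero_lt_one hn
  have hτpos : 0 < τ := by rw [hτ]; positivity
  set a := ((k:ℝ) - 1) * τ with ha
  set m := (k:ℝ) * τ with hm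
  set b := ((k:ℝ) + 1) * τ with hb
  have hk1' : (1:ℝ) ≤ (k:ℝ) := by exact_mod_cast hk1
  have hkn' : (k:ℝ) + 1 ≤ (n:ℝ) := by exact_mod_cast hk
  have ha0 : 0 ≤ a := mul_nonneg (by linarith) hτpos.le
  have ham : a ≤ m := by rw [ha, hm]; nlinarith
  have hmb : m ≤ b := by rw [hm, hb]; nlinarith
  have hab : a ≤ b := ham.trans hmb
  have hbT : b ≤ T := by
    rw [hb, hτ]
    have h1 : ((k:ℝ) + 1) * (T / n) ≤ (n:ℝ) * (T / n) :=
      mul_le_mul_of_nonneg_right hkn' (by positivity)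
    have h2 : (n:ℝ) * (T / n) = T := by field_simp
    linarith
  -- integrability of g and its norm on [0, T]
  have hconst : IntegrableOn (fun _ : ℝ => (1:ℝ)) (Set.Ioc 0 T) :=
    (integrableOn_const_iff).mpr (Or.inr measure_Ioc_lt_top)
  have hgn_int : IntegrableOn (fun s => ‖g s‖) (Set.Ioc 0 T) := by
    apply Integrable.mono' (hconst.add hg_int)
      (hg_meas.norm.aestronglyMeasurable.restrict)
    · filter_upwards with s
      simp only [Pi.add_apply]
      rw [Real.norm_of_nonneg (norm_nonneg _)]
      nlinarith [norm_nonneg (g s), sq_nonneg (‖g s‖ - 1)]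
  have hg_intOn : IntegrableOn g (Set.Ioc 0 T) :=
    (integrable_norm_iff hg_meas.aestronglyMeasurable.restrict).mp hgn_int
  -- interval integrability of g on subintervals of [0, T]
  have hgI : ∀ u v : ℝ, 0 ≤ u → u ≤ v → v ≤ T → IntervalIntegrable g volume u v := by
    intro u v hu huv hv
    rw [intervalIntegrable_iff_integrableOn_Ioc_of_le huv]
    exact hg_intOn.mono_set (Set.Ioc_subset_Ioc hu hv)
  -- continuity of f on [0, T]
  have hfc : ContinuousOn f (Set.Icc 0 T) := by
    have hIcc : IntegrableOn g (Set.uIcc 0 T) := by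
      rw [Set.uIcc_of_le hT.le, integrableOn_Icc_iff_integrableOn_Ioc]
      exact hg_intOn
    have := (continuousOn_const (c := f0)).add
      (intervalIntegral.continuousOn_primitive_interval hIcc)
    rw [Set.uIcc_of_le hT.le] at this
    exact this.congr fun t _ => (hf t)
  have hfI : ∀ u v : ℝ, 0 ≤ u → u ≤ v → v ≤ T → IntervalIntegrable f volume u v := by
    intro u v hu huv hv
    apply ContinuousOn.intervalIntegrable
    apply hfc.mono
    rw [Set.uIcc_of_le huv]
    exact Set.Icc_subset_Icc hu hv
  -- the squared-norm integral over [a, b]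
  set I := ∫ s in Set.Ioc a b, ‖g s‖ ^ 2 with hI
  have hg2_ab : IntegrableOn (fun s => ‖g s‖ ^ 2) (Set.Ioc a b) :=
    hg_int.mono_set (Set.Ioc_subset_Ioc ha0 hbT)
  have hInn : 0 ≤ I := setIntegral_nonneg measurableSet_Ioc fun s _ => sq_nonneg _
  set C := Real.sqrt (τ * I) with hC
  -- pointwise bound
  have hpt : ∀ t ∈ Set.Ioc a m, ‖f (t + τ) - f t‖ ≤ C := by
    intro t ht
    have ht0 : 0 ≤ t := le_trans ha0 ht.1.le
    have htT : t + τ ≤ T := by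
      have : t ≤ m := ht.2
      have : t + τ ≤ m + τ := by linarith
      have hmb' : m + τ = b := by rw [hm, hb]; ring
      linarith [hbT, hmb' ▸ this]
    have hfd : f (t + τ) - f t = ∫ s in t..(t + τ), g s := by
      rw [hf, hf]
      rw [add_sub_add_left_eq_sub]
      exact intervalIntegral.integral_interval_sub_left
        (hgI 0 (t + τ) le_rfl (by linarith) htT) (hgI 0 t le_rfl ht0 (by linarith))
    rw [hfd]
    have h1 : ‖∫ s in t..(t + τ), g s‖ ≤ ∫ s in Set.Ioc t (t + τ), ‖g s‖ := by
      rw [intervalIntegral.integral_of_le (by linarith)]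
      exact norm_integral_le_integral_norm _
    have hsub : Set.Ioc t (t + τ) ⊆ Set.Ioc a b := by
      apply Set.Ioc_subset_Ioc ht.1.le
      have hmb' : m + τ = b := by rw [hm, hb]; ring
      linarith [ht.2]
    have h2 : ∫ s in Set.Ioc t (t + τ), ‖g s‖ ≤
        Real.sqrt ((t + τ - t) * ∫ s in Set.Ioc t (t + τ), ‖g s‖ ^ 2) := by
      apply sq_integral_le (fun s => norm_nonneg _) (by linarith)
      · exact (hgn_int.mono_set (hsub.trans (Set.Ioc_subset_Ioc ha0 hbT)))
      · exact hg2_ab.mono_set hsub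
    have h3 : ∫ s in Set.Ioc t (t + τ), ‖g s‖ ^ 2 ≤ I := by
      apply setIntegral_mono_set hg2_ab
      · filter_upwards with s using sq_nonneg _
      · exact Filter.Eventually.of_forall hsub
    calc ‖∫ s in t..(t + τ), g s‖ ≤ _ := h1
      _ ≤ _ := h2
      _ ≤ C := by
          apply Real.sqrt_le_sqrt
          have : t + τ - t = τ := by ring
          rw [this]
          exact mul_le_mul_of_nonneg_left h3 hτpos.le
  -- the key identity
  have hdiff : fτ (k + 1) - fτ k = (1/τ) • ∫ t in a..m, (f (t + τ) - f t) := by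
    have e1 := hfτ (k + 1) (by omega) hk
    have e2 := hfτ k hk1 (by omega)
    have c1 : ((↑(k+1) : ℝ) - 1) * τ = m := by push_cast; rw [hm]; ring
    have c2 : ((↑(k+1) : ℝ)) * τ = b := by push_cast; rw [hb]
    rw [c1, c2] at e1
    rw [e1, e2, ← smul_sub]
    congr 1
    have hshift : (∫ t in a..m, f (t + τ)) = ∫ t in m..b, f t := by
      rw [intervalIntegral.integral_comp_add_right f τ]
      congr 1
      · rw [ha, hm]; ring
      · rw [hm, hb]; ring
    have if1 : IntervalIntegrable (fun t => f (t + τ)) volume a m := by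
      have := (hfI m b (by linarith) hmb hbT)
      have h' := this.comp_add_right τ
      have ea : m - τ = a := by rw [ha, hm]; ring
      have eb : b - τ = m := by rw [hm, hb]; ring
      rwa [ea, eb] at h'
    have if2 : IntervalIntegrable f volume a m := hfI a m ha0 ham (by linarith)
    rw [intervalIntegral.integral_sub if1 if2, hshift]
  -- putting it together
  have hnorm : ‖fτ (k + 1) - fτ k‖ ≤ C := by
    rw [hdiff, norm_smul]
    have hbound : ‖∫ t in a..m, (f (t + τ) - f t)‖ ≤ C * |m - a| := by
      apply intervalIntegral.norm_integral_le_of_norm_le_const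
      intro x hx
      rw [Set.uIoc_of_le ham] at hx
      exact hpt x hx
    have hma : |m - a| = τ := by
      rw [abs_of_nonneg (by linarith), ha, hm]; ring
    rw [hma] at hbound
    calc ‖(1/τ : ℝ)‖ * ‖∫ t in a..m, (f (t + τ) - f t)‖
        ≤ ‖(1/τ : ℝ)‖ * (C * τ) := by
          exact mul_le_mul_of_nonneg_left hbound (norm_nonneg _)
      _ = C := by
          rw [Real.norm_of_nonneg (by positivity)]
          field_simp
  have hIeq : (∫ s in a..b, ‖g s‖ ^ 2) = I := intervalIntegral.integral_of_le hab
  rw [hIeq]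
  calc ‖fτ (k + 1) - fτ k‖ ^ 2 ≤ C ^ 2 := by
        apply pow_le_pow_left₀ (norm_nonneg _) hnorm
    _ = τ * I := Real.sq_sqrt (by positivity)
end

section
/- With E, T, n, τ, g, f₀, f and the averaged interpolants f_τ^k as in the context, the initial-step estimate ‖f_τ^1 − f₀‖² ≤ τ · ∫_0^τ ‖g(s)‖² ds holds. -/
open MeasureTheory

/-- Initial-step estimate in Lemma 11 of the paper:
`‖f_τ^1 − f₀‖² ≤ τ ∫_0^τ ‖g(s)‖² ds`. -/
theorem initial_step_interpolant_estimate
    {E : Type*} [NormedAddCommGroup E] [NormedSpace ℝ E] [CompleteSpace E]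
    (T : ℝ) (hT : 0 < T) (n : ℕ) (hn : 1 ≤ n) (τ : ℝ) (hτ : τ = T / n)
    (g : ℝ → E) (hg_meas : StronglyMeasurable g)
    (hg_int : IntegrableOn (fun s => ‖g s‖ ^ 2) (Set.Ioc 0 T))
    (f0 : E) (f : ℝ → E) (hf : ∀ t, f t = f0 + ∫ s in (0:ℝ)..t, g s)
    (fτ : ℕ → E) (hfτ0 : fτ 0 = f0)
    (hfτ : ∀ k : ℕ, 1 ≤ k → k ≤ n →
      fτ k = (1 / τ) • ∫ t in (((k : ℝ) - 1) * τ)..((k : ℝ) * τ), f t) :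
    ‖fτ 1 - f0‖ ^ 2 ≤ τ * ∫ s in (0:ℝ)..τ, ‖g s‖ ^ 2 := by
  have hnpos : (0:ℝ) < n := by exact_mod_cast Nat.lt_of_lt_of_le Nat.zero_lt_one hn
  have hτpos : 0 < τ := by rw [hτ]; positivity
  have hτT : τ ≤ T := by
    rw [hτ, div_le_iff₀ hnpos]
    nlinarith [hT.le, (by exact_mod_cast hn : (1:ℝ) ≤ n)]
  -- integrability of ‖g‖² on Ioc 0 τ
  have hg2 : IntegrableOn (fun s => ‖g s‖ ^ 2) (Set.Ioc 0 τ) :=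
    hg_int.mono_set (Set.Ioc_subset_Ioc_right hτT)
  -- integrability of g on Ioc 0 τ
  have hbound : IntegrableOn (fun s => ‖g s‖ ^ 2 + 1) (Set.Ioc 0 τ) :=
    hg2.add (integrableOn_const measure_Ioc_lt_top.ne)
  have hgi : IntegrableOn g (Set.Ioc 0 τ) := by
    refine Integrable.mono' hbound hg_meas.aestronglyMeasurable.restrict ?_
    refine Filter.Eventually.of_forall fun x => ?_
    have : ‖g x‖ ≤ ‖g x‖ ^ 2 + 1 := by nlinarith [norm_nonneg (g x)]
    simpa using this
  have hgint : IntervalIntegrable g volume 0 τ := by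
    rw [intervalIntegrable_iff_integrableOn_Ioc_of_le hτpos.le]; exact hgi
  have hgnint : IntervalIntegrable (fun s => ‖g s‖) volume 0 τ := hgint.norm
  set I : ℝ := ∫ s in (0:ℝ)..τ, ‖g s‖ with hI
  have hInonneg : 0 ≤ I :=
    intervalIntegral.integral_nonneg hτpos.le (fun x _ => norm_nonneg _)
  set J : ℝ := ∫ s in (0:ℝ)..τ, ‖g s‖ ^ 2 with hJ
  have hJnonneg : 0 ≤ J :=
    intervalIntegral.integral_nonneg hτpos.le (fun x _ => by positivity)
  -- Step 1 : ‖fτ 1 - f0‖ ≤ I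
  have key1 : ‖fτ 1 - f0‖ ≤ I := by
    have h1 := hfτ 1 le_rfl hn
    simp only [Nat.cast_one, sub_self, zero_mul, one_mul] at h1
    -- f = f0 + F where F t = ∫ s in 0..t, g s
    set F : ℝ → E := fun t => ∫ s in (0:ℝ)..t, g s with hF
    have hFcont : ContinuousOn F (Set.uIcc (0:ℝ) τ) := by
      apply intervalIntegral.continuousOn_primitive_interval
      rw [Set.uIcc_of_le hτpos.le]
      exact (integrableOn_Icc_iff_integrableOn_Ioc).mpr hgi
    have hFii : IntervalIntegrable F volume 0 τ := hFcont.intervalIntegrable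
    have hfint : IntervalIntegrable f volume 0 τ := by
      have heq : f = fun t => f0 + F t := funext fun t => hf t
      rw [heq]
      exact (intervalIntegrable_const).add hFii
    have hsplit : fτ 1 - f0 = (1 / τ) • ∫ t in (0:ℝ)..τ, F t := by
      have : (∫ t in (0:ℝ)..τ, f t) = (∫ t in (0:ℝ)..τ, (f0 : E)) + ∫ t in (0:ℝ)..τ, F t := by
        rw [← intervalIntegral.integral_add intervalIntegrable_const hFii]
        exact intervalIntegral.integral_congr fun t _ => hf t
      rw [h1, this, intervalIntegral.integral_const, smul_add, smul_smul, sub_zero]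
      rw [one_div, inv_mul_cancel₀ hτpos.ne', one_smul, add_sub_cancel_left]
    -- bound ‖F t‖ ≤ I for t in [0, τ]
    have hFbound : ∀ t ∈ Set.uIcc (0:ℝ) τ, ‖F t‖ ≤ I := by
      intro t ht
      rw [Set.uIcc_of_le hτpos.le] at ht
      have h0t : (0:ℝ) ≤ t := ht.1
      have htτ : t ≤ τ := ht.2
      calc ‖F t‖ ≤ ∫ s in (0:ℝ)..t, ‖g s‖ :=
            intervalIntegral.norm_integral_le_integral_norm h0t
        _ ≤ I := by
            refine intervalIntegral.integral_mono_interval le_rfl h0t htτ ?_ hgnint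
            exact Filter.Eventually.of_forall fun x => norm_nonneg _
    have hnormint : ‖∫ t in (0:ℝ)..τ, F t‖ ≤ I * |τ - 0| := by
      refine intervalIntegral.norm_integral_le_of_norm_le_const fun x hx => hFbound x ?_
      rw [Set.uIoc_of_le hτpos.le] at hx
      rw [Set.uIcc_of_le hτpos.le]
      exact Set.Ioc_subset_Icc_self hx
    rw [hsplit, norm_smul]
    have : ‖(1:ℝ)/τ‖ = 1/τ := by
      rw [Real.norm_of_nonneg]; positivity
    rw [this]
    calc (1/τ) * ‖∫ t in (0:ℝ)..τ, F t‖ ≤ (1/τ) * (I * |τ - 0|) := by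
          apply mul_le_mul_of_nonneg_left hnormint; positivity
      _ = I := by
          rw [sub_zero, abs_of_pos hτpos]; field_simp
  -- Step 2 : I ^ 2 ≤ τ * J  (Cauchy–Schwarz)
  have key2 : I ^ 2 ≤ τ * J := by
    set μ : Measure ℝ := volume.restrict (Set.Ioc 0 τ) with hμ
    haveI : IsFiniteMeasure μ := ⟨by rw [hμ, Measure.restrict_apply_univ]; exact measure_Ioc_lt_top⟩
    have hpq : Real.HolderConjugate 2 2 := Real.holderConjugate_iff.mpr ⟨one_lt_two, by norm_num⟩
    have hmem1 : MemLp (fun s => ‖g s‖) (ENNReal.ofReal 2) μ := by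
      rw [show ENNReal.ofReal 2 = 2 by norm_num]
      exact (memLp_two_iff_integrable_sq hg_meas.norm.aestronglyMeasurable.restrict).2 hg2
    have hmem2 : MemLp (fun _ : ℝ => (1:ℝ)) (ENNReal.ofReal 2) μ := memLp_const 1
    have h := integral_mul_le_Lp_mul_Lq_of_nonneg hpq
      (Filter.Eventually.of_forall fun x => norm_nonneg (g x))
      (Filter.Eventually.of_forall fun _ => zero_le_one) hmem1 hmem2
    simp only [mul_one, one_pow] at h
    have hrpow : ∀ x : ℝ, x ^ (2:ℝ) = x ^ 2 := fun x => by
      rw [show (2:ℝ) = ((2:ℕ):ℝ) by norm_num, Real.rpow_natCast]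
    simp only [hrpow] at h
    have hμuniv : ∫ _ : ℝ, (1:ℝ) ∂μ = τ := by
      rw [integral_const, smul_eq_mul, mul_one, hμ, measureReal_def, Measure.restrict_apply_univ,
        Real.volume_Ioc, ENNReal.toReal_ofReal (by linarith), sub_zero]
    have hone : ∫ a, (1:ℝ) ^ 2 ∂μ = τ := by simpa using hμuniv
    rw [hone] at h
    have hIeq : I = ∫ a, ‖g a‖ ∂μ := intervalIntegral.integral_of_le hτpos.le
    have hJeq : J = ∫ a, ‖g a‖ ^ 2 ∂μ := intervalIntegral.integral_of_le hτpos.le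
    rw [← hIeq, ← hJeq] at h
    rw [← Real.sqrt_eq_rpow, ← Real.sqrt_eq_rpow] at h
    calc I ^ 2 ≤ (Real.sqrt J * Real.sqrt τ) ^ 2 := pow_le_pow_left₀ hInonneg h 2
      _ = J * τ := by rw [mul_pow, Real.sq_sqrt hJnonneg, Real.sq_sqrt hτpos.le]
      _ = τ * J := mul_comm _ _
  calc ‖fτ 1 - f0‖ ^ 2 ≤ I ^ 2 := pow_le_pow_left₀ (norm_nonneg _) key1 2
    _ ≤ τ * J := key2
end

section
/- Let H be a real inner product space, let j ≥ 1 be an integer, let τ > 0 and δ > 0, and let f_1, …, f_j and u_0, u_1, …, u_j be elements of H. Then: Σ_{k=1}^j ⟨f_k, u_k − u_{k−1}⟩ ≤ Σ_{k=1}^{j−1} ( (1/(2τ))‖f_{k+1} − f_k‖² + (τ/2)‖u_k‖² ) + (δ/2)‖u_j‖² + (1/(2δ))‖f_j‖² + ‖f_1‖·‖u_0‖. -/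
open scoped RealInnerProductSpace

private lemma young_inner {H : Type*} [NormedAddCommGroup H] [InnerProductSpace ℝ H]
    (x y : H) (c : ℝ) (hc : 0 < c) :
    ⟪x, y⟫ ≤ 1 / (2 * c) * ‖x‖ ^ 2 + c / 2 * ‖y‖ ^ 2 := by
  have h := real_inner_le_norm x y
  have h2 : ‖x‖ * ‖y‖ ≤ 1 / (2 * c) * ‖x‖ ^ 2 + c / 2 * ‖y‖ ^ 2 := by
    have key : 1 / (2 * c) * ‖x‖ ^ 2 + c / 2 * ‖y‖ ^ 2 - ‖x‖ * ‖y‖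
        = (‖x‖ - c * ‖y‖) ^ 2 / (2 * c) := by
      field_simp
      ring
    nlinarith [div_nonneg (sq_nonneg (‖x‖ - c * ‖y‖)) (by positivity : (0:ℝ) ≤ 2 * c)]
  linarith

private lemma abel_identity {H : Type*} [NormedAddCommGroup H] [InnerProductSpace ℝ H]
    (f u : ℕ → H) :
    ∀ j, 1 ≤ j →
      ∑ k ∈ Finset.Icc 1 j, ⟪f k, u k - u (k - 1)⟫
        = ⟪f j, u j⟫ - ⟪f 1, u 0⟫ - ∑ k ∈ Finset.Icc 1 (j - 1), ⟪f (k + 1) - f k, u k⟫ := by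
  intro j hj
  induction j, hj using Nat.le_induction with
  | base => simp [inner_sub_right]
  | succ n hn ih =>
    rw [Finset.sum_Icc_succ_top (by omega : 1 ≤ n + 1), ih]
    have h1 : n + 1 - 1 = n := rfl
    rw [h1, show n = n - 1 + 1 by omega, Finset.sum_Icc_succ_top (by omega : 1 ≤ n - 1 + 1),
      show n - 1 + 1 = n by omega]
    simp only [inner_sub_right, inner_sub_left]
    ring

/-- Estimate (eq. 54) of the paper, obtained from summation by parts, Cauchy–Schwarz
and Young's inequality. -/
theorem summation_by_parts_estimate
    {H : Type*} [NormedAddCommGroup H] [InnerProductSpace ℝ H]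
    (j : ℕ) (hj : 1 ≤ j) (τ δ : ℝ) (hτ : 0 < τ) (hδ : 0 < δ) (f u : ℕ → H) :
    ∑ k ∈ Finset.Icc 1 j, ⟪f k, u k - u (k - 1)⟫
      ≤ ∑ k ∈ Finset.Icc 1 (j - 1),
          ((1 / (2 * τ)) * ‖f (k + 1) - f k‖ ^ 2 + (τ / 2) * ‖u k‖ ^ 2)
        + (δ / 2) * ‖u j‖ ^ 2 + (1 / (2 * δ)) * ‖f j‖ ^ 2 + ‖f 1‖ * ‖u 0‖ := by
  rw [abel_identity f u j hj]
  have h1 : ⟪f j, u j⟫ ≤ 1 / (2 * δ) * ‖f j‖ ^ 2 + δ / 2 * ‖u j‖ ^ 2 :=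
    young_inner _ _ δ hδ
  have h2 : -⟪f 1, u 0⟫ ≤ ‖f 1‖ * ‖u 0‖ := by
    have := abs_real_inner_le_norm (f 1) (u 0)
    linarith [neg_abs_le ⟪f 1, u 0⟫]
  have h3 : -∑ k ∈ Finset.Icc 1 (j - 1), ⟪f (k + 1) - f k, u k⟫
      ≤ ∑ k ∈ Finset.Icc 1 (j - 1),
          ((1 / (2 * τ)) * ‖f (k + 1) - f k‖ ^ 2 + (τ / 2) * ‖u k‖ ^ 2) := by
    rw [← Finset.sum_neg_distrib]
    apply Finset.sum_le_sum
    intro k _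
    have : -⟪f (k + 1) - f k, u k⟫ = ⟪-(f (k + 1) - f k), u k⟫ := by
      rw [inner_neg_left]
    rw [this]
    have := young_inner (-(f (k + 1) - f k)) (u k) τ hτ
    simpa [norm_sub_rev (f (k+1)) (f k)] using this
  linarith
end

section
/- Let ψ : M₃(ℝ) → ℝ (a function on 3×3 real matrices) be twice continuously differentiable in a neighborhood of the identity matrix I, and assume ψ is frame-indifferent: ψ(QF) = ψ(F) for every rotation Q (3×3 real matrix with QᵀQ = I and det Q = 1) and every F ∈ M₃(ℝ). Identify the first derivative of ψ at I with the matrix S ∈ M₃(ℝ) via the Frobenius inner product ⟨A, B⟩ = tr(AᵀB) (so ⟨S, H⟩ = Dψ(I)[H]), and identify the second derivative with the linear map 𝔸 : M₃(ℝ) → M₃(ℝ) (so ⟨𝔸[H], G⟩ = D²ψ(I)[H, G]). Then for every H ∈ M₃(ℝ), writing E = (H + Hᵀ)/2 and sym(A) = (A + Aᵀ)/2: 𝔸[H] = sym(𝔸[E]) + H·S − sym(E·S). -/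
open Matrix Real Topology

attribute [local instance] Matrix.normedAddCommGroup Matrix.normedSpace

local notation "M3" => Matrix (Fin 3) (Fin 3) ℝ

/-! ### Basis skew matrices and rotation curve data -/

noncomputable def BB1 : M3 := !![0,-1,0; 1,0,0; 0,0,0]
noncomputable def BB2 : M3 := !![0,0,-1; 0,0,0; 1,0,0]
noncomputable def BB3 : M3 := !![0,0,0; 0,0,-1; 0,1,0]
noncomputable def CC1 : M3 := !![1,0,0; 0,1,0; 0,0,0]
noncomputable def KK1 : M3 := !![0,0,0; 0,0,0; 0,0,1]
noncomputable def CC2 : M3 := !![1,0,0; 0,0,0; 0,0,1]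
noncomputable def KK2 : M3 := !![0,0,0; 0,1,0; 0,0,0]
noncomputable def CC3 : M3 := !![0,0,0; 0,1,0; 0,0,1]
noncomputable def KK3 : M3 := !![1,0,0; 0,0,0; 0,0,0]

lemma BB1_skew : BB1ᵀ = -BB1 := by
  ext i j; fin_cases i <;> fin_cases j <;> simp [BB1, Matrix.vecHead, Matrix.vecTail]
lemma BB2_skew : BB2ᵀ = -BB2 := by
  ext i j; fin_cases i <;> fin_cases j <;> simp [BB2, Matrix.vecHead, Matrix.vecTail]
lemma BB3_skew : BB3ᵀ = -BB3 := by
  ext i j; fin_cases i <;> fin_cases j <;> simp [BB3, Matrix.vecHead, Matrix.vecTail]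

lemma axis1_sum : CC1 + KK1 = 1 := by
  ext i j; fin_cases i <;> fin_cases j <;>
    simp [CC1, KK1, Matrix.one_apply, Matrix.vecHead, Matrix.vecTail]
lemma axis2_sum : CC2 + KK2 = 1 := by
  ext i j; fin_cases i <;> fin_cases j <;>
    simp [CC2, KK2, Matrix.one_apply, Matrix.vecHead, Matrix.vecTail]
lemma axis3_sum : CC3 + KK3 = 1 := by
  ext i j; fin_cases i <;> fin_cases j <;>
    simp [CC3, KK3, Matrix.one_apply, Matrix.vecHead, Matrix.vecTail]

lemma axis1_eq (t : ℝ) : Real.cos t • CC1 + Real.sin t • BB1 + KK1 =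
    !![Real.cos t, -Real.sin t, 0; Real.sin t, Real.cos t, 0; 0,0,1] := by
  ext i j; fin_cases i <;> fin_cases j <;>
    simp [CC1, BB1, KK1, Matrix.vecHead, Matrix.vecTail]
lemma axis2_eq (t : ℝ) : Real.cos t • CC2 + Real.sin t • BB2 + KK2 =
    !![Real.cos t, 0, -Real.sin t; 0, 1, 0; Real.sin t, 0, Real.cos t] := by
  ext i j; fin_cases i <;> fin_cases j <;>
    simp [CC2, BB2, KK2, Matrix.vecHead, Matrix.vecTail]
lemma axis3_eq (t : ℝ) : Real.cos t • CC3 + Real.sin t • BB3 + KK3 =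
    !![1, 0, 0; 0, Real.cos t, -Real.sin t; 0, Real.sin t, Real.cos t] := by
  ext i j; fin_cases i <;> fin_cases j <;>
    simp [CC3, BB3, KK3, Matrix.vecHead, Matrix.vecTail]

lemma axis1_orth (t : ℝ) : (Real.cos t • CC1 + Real.sin t • BB1 + KK1)ᵀ *
    (Real.cos t • CC1 + Real.sin t • BB1 + KK1) = 1 := by
  rw [axis1_eq]
  ext i j
  fin_cases i <;> fin_cases j <;>
    simp [Matrix.mul_apply, Matrix.transpose_apply, Fin.sum_univ_three, Matrix.one_apply,
      Matrix.vecHead, Matrix.vecTail] <;>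
    ring_nf <;> simp [Real.sin_sq_add_cos_sq, Real.cos_sq_add_sin_sq]
lemma axis2_orth (t : ℝ) : (Real.cos t • CC2 + Real.sin t • BB2 + KK2)ᵀ *
    (Real.cos t • CC2 + Real.sin t • BB2 + KK2) = 1 := by
  rw [axis2_eq]
  ext i j
  fin_cases i <;> fin_cases j <;>
    simp [Matrix.mul_apply, Matrix.transpose_apply, Fin.sum_univ_three, Matrix.one_apply,
      Matrix.vecHead, Matrix.vecTail] <;>
    ring_nf <;> simp [Real.sin_sq_add_cos_sq, Real.cos_sq_add_sin_sq]
lemma axis3_orth (t : ℝ) : (Real.cos t • CC3 + Real.sin t • BB3 + KK3)ᵀ *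
    (Real.cos t • CC3 + Real.sin t • BB3 + KK3) = 1 := by
  rw [axis3_eq]
  ext i j
  fin_cases i <;> fin_cases j <;>
    simp [Matrix.mul_apply, Matrix.transpose_apply, Fin.sum_univ_three, Matrix.one_apply,
      Matrix.vecHead, Matrix.vecTail] <;>
    ring_nf <;> simp [Real.sin_sq_add_cos_sq, Real.cos_sq_add_sin_sq]

lemma axis1_det (t : ℝ) : (Real.cos t • CC1 + Real.sin t • BB1 + KK1).det = 1 := by
  rw [axis1_eq]
  simp [Matrix.det_fin_three, Matrix.vecHead, Matrix.vecTail]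
  ring_nf
  simp [Real.sin_sq_add_cos_sq, Real.cos_sq_add_sin_sq]
lemma axis2_det (t : ℝ) : (Real.cos t • CC2 + Real.sin t • BB2 + KK2).det = 1 := by
  rw [axis2_eq]
  simp [Matrix.det_fin_three, Matrix.vecHead, Matrix.vecTail]
  ring_nf
  simp [Real.sin_sq_add_cos_sq, Real.cos_sq_add_sin_sq]
lemma axis3_det (t : ℝ) : (Real.cos t • CC3 + Real.sin t • BB3 + KK3).det = 1 := by
  rw [axis3_eq]
  simp [Matrix.det_fin_three, Matrix.vecHead, Matrix.vecTail]
  ring_nf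
  simp [Real.sin_sq_add_cos_sq, Real.cos_sq_add_sin_sq]

/-! ### Trace algebra -/

lemma nondeg (X : M3) (h : ∀ G : M3, Matrix.trace (Xᵀ * G) = 0) : X = 0 := by
  have hX := h X
  have hsum : ∑ p : Fin 3 × Fin 3, X p.2 p.1 * X p.2 p.1 = 0 := by
    rw [Fintype.sum_prod_type]
    simpa [Matrix.trace, Matrix.mul_apply, Matrix.diag, Matrix.transpose_apply] using hX
  have hz := (Finset.sum_eq_zero_iff_of_nonneg
    (fun p _ => mul_self_nonneg (X p.2 p.1))).mp hsum
  ext i j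
  have := hz (j, i) (Finset.mem_univ _)
  simpa [mul_self_eq_zero] using this

lemma trace_mul_skew (X B : M3) (hB : Bᵀ = -B) :
    Matrix.trace (X * B) = -Matrix.trace (Xᵀ * B) := by
  calc Matrix.trace (X * B) = Matrix.trace ((X * B)ᵀ) := (Matrix.trace_transpose _).symm
    _ = Matrix.trace (Bᵀ * Xᵀ) := by rw [Matrix.transpose_mul]
    _ = Matrix.trace (Xᵀ * Bᵀ) := Matrix.trace_mul_comm _ _
    _ = -Matrix.trace (Xᵀ * B) := by rw [hB, Matrix.mul_neg, Matrix.trace_neg]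

lemma trace_sym_skew (S Z : M3) (hS : Sᵀ = S) (hZ : Zᵀ = -Z) :
    Matrix.trace (Sᵀ * Z) = 0 := by
  rw [hS]
  have h := trace_mul_skew S Z hZ
  rw [hS] at h
  linarith

lemma skew_decomp (W : M3) (h : Wᵀ = -W) :
    W = W 1 0 • BB1 + W 2 0 • BB2 + W 2 1 • BB3 := by
  have h' : ∀ i j, W j i = -W i j := fun i j => by
    have := congrFun (congrFun h i) j
    simpa [Matrix.transpose_apply] using this
  ext i j
  fin_cases i <;> fin_cases j <;>
    simp [BB1, BB2, BB3, Matrix.vecHead, Matrix.vecTail] <;>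
    linarith [h' 0 0, h' 1 1, h' 2 2, h' 0 1, h' 0 2, h' 1 2]

/-! ### Analysis lemmas -/

lemma key_deriv (ψ : M3 → ℝ) (U : Set M3) (hUo : IsOpen U)
    (hψ : ContDiffOn ℝ 2 ψ U)
    (hframe : ∀ Q F : M3, Qᵀ * Q = 1 → Q.det = 1 → ψ (Q * F) = ψ F)
    (C B K : M3) (h0 : C + K = 1)
    (h1 : ∀ t : ℝ, (Real.cos t • C + Real.sin t • B + K)ᵀ *
        (Real.cos t • C + Real.sin t • B + K) = 1)
    (h2 : ∀ t : ℝ, (Real.cos t • C + Real.sin t • B + K).det = 1)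
    (F : M3) (hF : F ∈ U) :
    fderiv ℝ ψ F (B * F) = 0 := by
  set q : ℝ → M3 := fun t => Real.cos t • C + Real.sin t • B + K with hq
  have hq0 : q 0 = 1 := by simp [hq, h0]
  have hc : HasDerivAt (fun t : ℝ => q t * F) (B * F) 0 := by
    have e : (fun t : ℝ => q t * F)
        = fun t => Real.cos t • (C * F) + Real.sin t • (B * F) + K * F := by
      funext t; simp [hq, Matrix.add_mul, smul_mul_assoc]
    rw [e]
    have hcos := (Real.hasDerivAt_cos 0).smul_const (C * F)
    have hsin := (Real.hasDerivAt_sin 0).smul_const (B * F)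
    have h := (hcos.add hsin).add_const (K * F)
    exact h.congr_deriv (by simp)
  have hdψ : DifferentiableAt ℝ ψ F :=
    (hψ.differentiableOn (by norm_num)).differentiableAt (hUo.mem_nhds hF)
  have h' : HasFDerivAt ψ (fderiv ℝ ψ F) (q 0 * F) := by
    rw [hq0, one_mul]; exact hdψ.hasFDerivAt
  have hcomp : HasDerivAt (fun t => ψ (q t * F)) (fderiv ℝ ψ F (B * F)) 0 :=
    h'.comp_hasDerivAt 0 hc
  have hconst : HasDerivAt (fun t => ψ (q t * F)) 0 0 := by
    have e : (fun t => ψ (q t * F)) = fun _ => ψ F :=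
      funext fun t => hframe (q t) F (h1 t) (h2 t)
    rw [e]; exact hasDerivAt_const 0 _
  exact hcomp.unique hconst

lemma key2 (ψ : M3 → ℝ) (U : Set M3) (hUo : IsOpen U) (h1U : (1:M3) ∈ U)
    (hψ : ContDiffOn ℝ 2 ψ U) (B : M3)
    (hB : ∀ F ∈ U, fderiv ℝ ψ F (B * F) = 0) (H : M3) :
    fderiv ℝ ψ 1 (B * H) + fderiv ℝ (fderiv ℝ ψ) 1 H B = 0 := by
  have hcd : ContDiffAt ℝ 2 ψ 1 := hψ.contDiffAt (hUo.mem_nhds h1U)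
  have hd2 : DifferentiableAt ℝ (fderiv ℝ ψ) 1 :=
    (hcd.fderiv_right (m := 1) (by norm_num)).differentiableAt (by norm_num)
  set L : M3 →L[ℝ] M3 := LinearMap.toContinuousLinearMap (LinearMap.mulLeft ℝ B) with hL
  have hLF : HasFDerivAt (fun F : M3 => B * F) L 1 := L.hasFDerivAt
  have happ := hd2.hasFDerivAt.clm_apply hLF
  have hev : (fun F : M3 => fderiv ℝ ψ F (B * F)) =ᶠ[𝓝 1] fun _ => 0 :=
    Filter.eventuallyEq_of_mem (hUo.mem_nhds h1U) (fun F hF => hB F hF)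
  have h0 : HasFDerivAt (fun F : M3 => fderiv ℝ ψ F (B * F)) 0 1 :=
    (hasFDerivAt_const (𝕜 := ℝ) (0:ℝ) (1:M3)).congr_of_eventuallyEq hev
  have hD := happ.unique h0
  have h3 := congrFun (congrArg DFunLike.coe hD) H
  simp only [ContinuousLinearMap.add_apply, ContinuousLinearMap.comp_apply,
    ContinuousLinearMap.flip_apply, ContinuousLinearMap.zero_apply, hL,
    LinearMap.coe_toContinuousLinearMap', LinearMap.mulLeft_apply, mul_one] at h3
  exact h3


/-- Representation formula (eq. 36) for the second derivative of a frame-indifferent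
stored energy at the identity: `𝔸[H] = sym(𝔸[E]) + H·S − sym(E·S)` with
`E = (H + Hᵀ)/2`, where `S` represents the first derivative and `𝔸` the second
derivative of `ψ` at the identity via the Frobenius inner product. -/
theorem frame_indifference_second_derivative_representation
    (ψ : Matrix (Fin 3) (Fin 3) ℝ → ℝ)
    (hψ : ∃ U : Set (Matrix (Fin 3) (Fin 3) ℝ),
      IsOpen U ∧ (1 : Matrix (Fin 3) (Fin 3) ℝ) ∈ U ∧ ContDiffOn ℝ 2 ψ U)
    (hframe : ∀ Q F : Matrix (Fin 3) (Fin 3) ℝ,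
      Qᵀ * Q = 1 → Q.det = 1 → ψ (Q * F) = ψ F)
    (S : Matrix (Fin 3) (Fin 3) ℝ)
    (hS : ∀ H : Matrix (Fin 3) (Fin 3) ℝ,
      Matrix.trace (Sᵀ * H) = fderiv ℝ ψ 1 H)
    (A : Matrix (Fin 3) (Fin 3) ℝ →ₗ[ℝ] Matrix (Fin 3) (Fin 3) ℝ)
    (hA : ∀ H G : Matrix (Fin 3) (Fin 3) ℝ,
      Matrix.trace ((A H)ᵀ * G) = fderiv ℝ (fderiv ℝ ψ) 1 H G) :
    ∀ H : Matrix (Fin 3) (Fin 3) ℝ,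
      A H = (2⁻¹ : ℝ) • (A ((2⁻¹ : ℝ) • (H + Hᵀ)) + (A ((2⁻¹ : ℝ) • (H + Hᵀ)))ᵀ)
        + H * S
        - (2⁻¹ : ℝ) • ((((2⁻¹ : ℝ) • (H + Hᵀ)) * S) + ((((2⁻¹ : ℝ) • (H + Hᵀ)) * S))ᵀ) := by
  intro H
  obtain ⟨U, hUo, h1U, hψU⟩ := hψ
  -- rotation-invariance at first order
  have hB1 : ∀ F ∈ U, fderiv ℝ ψ F (BB1 * F) = 0 :=
    key_deriv ψ U hUo hψU hframe CC1 BB1 KK1 axis1_sum axis1_orth axis1_det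
  have hB2 : ∀ F ∈ U, fderiv ℝ ψ F (BB2 * F) = 0 :=
    key_deriv ψ U hUo hψU hframe CC2 BB2 KK2 axis2_sum axis2_orth axis2_det
  have hB3 : ∀ F ∈ U, fderiv ℝ ψ F (BB3 * F) = 0 :=
    key_deriv ψ U hUo hψU hframe CC3 BB3 KK3 axis3_sum axis3_orth axis3_det
  -- second-order relation for basis skews
  have K2 : ∀ (B : M3), (∀ F ∈ U, fderiv ℝ ψ F (B * F) = 0) → ∀ G : M3,
      Matrix.trace ((A G)ᵀ * B) + Matrix.trace (Sᵀ * (B * G)) = 0 := by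
    intro B hB G
    have h := key2 ψ U hUo h1U hψU B hB G
    rw [← hS, ← hA] at h
    linarith
  have K21 := K2 BB1 hB1
  have K22 := K2 BB2 hB2
  have K23 := K2 BB3 hB3
  -- S is symmetric
  have hStr : ∀ (B : M3), (∀ F ∈ U, fderiv ℝ ψ F (B * F) = 0) →
      Matrix.trace (Sᵀ * B) = 0 := by
    intro B hB
    have h := hB 1 h1U
    rw [mul_one] at h
    rw [hS]; exact h
  have hS1 := hStr BB1 hB1
  have hS2 := hStr BB2 hB2
  have hS3 := hStr BB3 hB3
  have hSsym : Sᵀ = S := by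
    simp [Matrix.trace, Matrix.diag, Matrix.mul_apply, Matrix.transpose_apply,
      Fin.sum_univ_three, BB1, Matrix.vecHead, Matrix.vecTail] at hS1
    simp [Matrix.trace, Matrix.diag, Matrix.mul_apply, Matrix.transpose_apply,
      Fin.sum_univ_three, BB2, Matrix.vecHead, Matrix.vecTail] at hS2
    simp [Matrix.trace, Matrix.diag, Matrix.mul_apply, Matrix.transpose_apply,
      Fin.sum_univ_three, BB3, Matrix.vecHead, Matrix.vecTail] at hS3
    ext i j
    fin_cases i <;> fin_cases j <;> simp [Matrix.transpose_apply] <;> linarith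
  -- second-order relation for arbitrary skews
  have K2s : ∀ (W G : M3), Wᵀ = -W →
      Matrix.trace ((A G)ᵀ * W) = -Matrix.trace (Sᵀ * (W * G)) := by
    intro W G hW
    rw [skew_decomp W hW]
    simp only [Matrix.mul_add, Matrix.add_mul, Matrix.mul_smul, Matrix.smul_mul,
      Matrix.trace_add, Matrix.trace_smul, smul_eq_mul]
    linear_combination (W 1 0) * K21 G + (W 2 0) * K22 G + (W 2 1) * K23 G
  -- symmetry of the second derivative
  have hcd : ContDiffAt ℝ 2 ψ 1 := hψU.contDiffAt (hUo.mem_nhds h1U)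
  have hsymm := hcd.isSymmSndFDerivAt (by norm_num)
  have K3 : ∀ G G' : M3, Matrix.trace ((A G)ᵀ * G') = Matrix.trace ((A G')ᵀ * G) := by
    intro G G'
    rw [hA, hA]
    exact hsymm G G'
  -- symmetric and skew parts
  set E : M3 := (2⁻¹ : ℝ) • (H + Hᵀ) with hE
  set W' : M3 := (2⁻¹ : ℝ) • (H - Hᵀ) with hW'
  have hEsym : Eᵀ = E := by
    rw [hE, Matrix.transpose_smul, Matrix.transpose_add, Matrix.transpose_transpose,
      add_comm Hᵀ H]
  have hWskew : W'ᵀ = -W' := by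
    rw [hW', Matrix.transpose_smul, Matrix.transpose_sub, Matrix.transpose_transpose,
      ← smul_neg, neg_sub]
  have hHEW : H = E + W' := by rw [hE, hW']; module
  -- P1 : A W' = W' * S
  have P1 : A W' = W' * S := by
    have h0 : A W' - W' * S = 0 := by
      apply nondeg
      intro G
      rw [Matrix.transpose_sub, Matrix.sub_mul, Matrix.trace_sub]
      have e1 : Matrix.trace ((A W')ᵀ * G) = -Matrix.trace (Sᵀ * (W' * G)) := by
        rw [K3 W' G]; exact K2s W' G hWskew
      have e2 : Matrix.trace ((W' * S)ᵀ * G) = -Matrix.trace (Sᵀ * (W' * G)) := by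
        rw [Matrix.transpose_mul, Matrix.mul_assoc, hWskew, Matrix.neg_mul,
          Matrix.mul_neg, Matrix.trace_neg]
      rw [e1, e2]; ring
    exact sub_eq_zero.mp h0
  -- P2 : skew part of A E equals skew part of E * S
  have P2 : A E - (A E)ᵀ = E * S - (E * S)ᵀ := by
    set Y : M3 := (A E - (A E)ᵀ) - (E * S - (E * S)ᵀ) with hY
    have hYskew : Yᵀ = -Y := by
      rw [hY]
      simp only [Matrix.transpose_sub, Matrix.transpose_transpose]
      abel
    have hpair : ∀ B : M3, Bᵀ = -B → Matrix.trace (Yᵀ * B) = 0 := by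
      intro B hB
      rw [hYskew, Matrix.neg_mul, Matrix.trace_neg, hY]
      rw [Matrix.sub_mul, Matrix.sub_mul, Matrix.sub_mul, Matrix.trace_sub,
        Matrix.trace_sub, Matrix.trace_sub]
      have e1 : Matrix.trace ((A E)ᵀ * B) = -Matrix.trace (Sᵀ * (B * E)) :=
        K2s B E hB
      have e2 : Matrix.trace (A E * B) = Matrix.trace (Sᵀ * (B * E)) := by
        rw [trace_mul_skew (A E) B hB, e1]; ring
      have e3 : Matrix.trace ((E * S)ᵀ * B) = Matrix.trace (Sᵀ * (E * B)) := by
        rw [Matrix.transpose_mul, hEsym, Matrix.mul_assoc]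
      have e4 : Matrix.trace (E * S * B) = -Matrix.trace (Sᵀ * (E * B)) := by
        rw [trace_mul_skew (E * S) B hB, e3]
      have e5 : Matrix.trace (Sᵀ * (B * E)) + Matrix.trace (Sᵀ * (E * B)) = 0 := by
        rw [← Matrix.trace_add, ← Matrix.mul_add]
        apply trace_sym_skew S _ hSsym
        rw [Matrix.transpose_add, Matrix.transpose_mul, Matrix.transpose_mul,
          hEsym, hB]
        simp only [Matrix.neg_mul, Matrix.mul_neg]
        abel
      rw [e1, e2, e4, e3]
      linarith
    have hY' : ∀ i j, Y j i = -Y i j := fun i j => by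
      have := congrFun (congrFun hYskew i) j
      simpa [Matrix.transpose_apply] using this
    have hp1 := hpair BB1 BB1_skew
    have hp2 := hpair BB2 BB2_skew
    have hp3 := hpair BB3 BB3_skew
    simp [Matrix.trace, Matrix.diag, Matrix.mul_apply, Matrix.transpose_apply,
      Fin.sum_univ_three, BB1, Matrix.vecHead, Matrix.vecTail] at hp1
    simp [Matrix.trace, Matrix.diag, Matrix.mul_apply, Matrix.transpose_apply,
      Fin.sum_univ_three, BB2, Matrix.vecHead, Matrix.vecTail] at hp2
    simp [Matrix.trace, Matrix.diag, Matrix.mul_apply, Matrix.transpose_apply,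
      Fin.sum_univ_three, BB3, Matrix.vecHead, Matrix.vecTail] at hp3
    have hz : Y = 0 := by
      ext i j
      fin_cases i <;> fin_cases j <;> simp <;>
        linarith [hY' 0 0, hY' 1 1, hY' 2 2, hY' 0 1, hY' 0 2, hY' 1 2]
    exact sub_eq_zero.mp hz
  -- final assembly
  have hT : (A E)ᵀ = A E - (E * S - (E * S)ᵀ) := by rw [← P2]; abel
  rw [hHEW, map_add, P1, Matrix.add_mul, hT]
  module
end
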